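/- Let f : 2^V → ℝ be a symmetric submodular function on a finite set V of cardinality n ≥ 2, let α ∈ [−1, 1], and let (v_1, …, v_n) be an α-ordering of V with respect to f. Then (v_{n−1}, v_n) is a contractible pair with respect to f. -/

import Mathlib

open Finset

def Submodular {V : Type*} [DecidableEq V] [Fintype V] (f : Finset V → ℝ) : Prop :=
  ∀ X Y : Finset V, f X + f Y ≥ f (X ∪ Y) + f (X ∩ Y)

def prefSet {V : Type*} [DecidableEq V] {n : ℕ} (v : Fin n → V) (i : Fin n) : Finset V :=
  (Finset.univ.filter (fun k : Fin n => k < i)).image v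

def IsAlphaOrdering {V : Type*} [DecidableEq V] {n : ℕ} (α : ℝ)
    (f : Finset V → ℝ) (v : Fin n → V) : Prop :=
  ∀ i j : Fin n, i ≤ j →
    f (insert (v i) (prefSet v i)) + α * f {v i} ≤
      f (insert (v j) (prefSet v i)) + α * f {v j}

def ContractiblePair {V : Type*} [DecidableEq V] [Fintype V]
    (f : Finset V → ℝ) (u w : V) : Prop :=
  ∀ X : Finset V, X ⊂ Finset.univ → (X ∩ ({u, w} : Finset V)).card = 1 →
    Finset.univ.inf' ⟨u, Finset.mem_univ u⟩ (fun x => f {x}) ≤ f X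

namespace Stmt5Aux

variable {n : ℕ}

/-- prefix strictly below `i` -/
def W' (i : Fin n) : Finset (Fin n) := Finset.univ.filter (fun k : Fin n => k < i)

/-- side of `t` within positions `≤ t` -/
def Zs (S : Finset (Fin n)) (t : Fin n) : Finset (Fin n) :=
  Finset.univ.filter (fun p => p ≤ t ∧ ((p ∈ S) ↔ (t ∈ S)))

/-- opposite side within positions `≤ t` -/
def Ys (S : Finset (Fin n)) (t : Fin n) : Finset (Fin n) :=
  Finset.univ.filter (fun p => p ≤ t ∧ ¬((p ∈ S) ↔ (t ∈ S)))

def prv (t : Fin n) : Fin n := ⟨t.val - 1, by have := t.isLt; omega⟩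

lemma const_side (S : Finset (Fin n)) (s t : Fin n)
    (hnc : ∀ r : Fin n, s < r → r < t → ((prv r ∈ S) ↔ (r ∈ S))) :
    ∀ m : ℕ, ∀ p : Fin n, p.val = s.val + m → p < t → ((p ∈ S) ↔ (s ∈ S)) := by
  intro m
  induction m with
  | zero =>
    intro p hp _
    have : p = s := Fin.ext (by omega)
    rw [this]
  | succ m ih =>
    intro p hp hpt
    have hsp : s < p := by rw [Fin.lt_def]; omega
    have h1 := hnc p hsp hpt
    have hq : (prv p).val = s.val + m := by simp only [prv]; omega
    have hqt : prv p < t := by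
      rw [Fin.lt_def] at hpt ⊢; simp only [prv]; omega
    have h2 := ih (prv p) hq hqt
    tauto

set_option maxHeartbeats 3000000 in
lemma core (hn0 : 0 < n) (g : Finset (Fin n) → ℝ) (α : ℝ) (hα : -1 ≤ α)
    (hsub : ∀ A B : Finset (Fin n), g (A ∪ B) + g (A ∩ B) ≤ g A + g B)
    (hord : ∀ i j : Fin n, i ≤ j →
      g (insert i (W' i)) + α * g {i} ≤ g (insert j (W' i)) + α * g {j})
    (S : Finset (Fin n)) :
    ∀ k : ℕ, ∀ t : Fin n, t.val = k → ¬((prv t ∈ S) ↔ (t ∈ S)) →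
      g (W' t) + (1 + α) * g {(⟨0, hn0⟩ : Fin n)} ≤ g (Zs S t) + g (Ys S t) + α * g {t} := by
  intro k
  induction k using Nat.strong_induction_on with
  | _ k IH =>
  intro t htk hcross
  have ht0 : 0 < t.val := by
    by_contra h
    have : prv t = t := Fin.ext (by simp only [prv]; omega)
    rw [this] at hcross
    exact hcross Iff.rfl
  set z0 : Fin n := ⟨0, hn0⟩ with hz0
  have hordz : (1 + α) * g {z0} ≤ (1 + α) * g {t} := by
    have hzt : z0 ≤ t := by rw [Fin.le_def]; exact Nat.zero_le _
    have h := hord z0 t hzt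
    have hW0 : W' z0 = (∅ : Finset (Fin n)) := by
      ext p; simp only [W', mem_filter, mem_univ, true_and, notMem_empty, iff_false, not_lt]; rw [Fin.le_def]; exact Nat.zero_le _
    rw [hW0] at h
    simp only [insert_empty_eq] at h
    nlinarith [h]
  by_cases hC : (Finset.univ.filter
      (fun s : Fin n => s < t ∧ ¬((prv s ∈ S) ↔ (s ∈ S)))).Nonempty
  · -- there is a previous crossing; take the largest
    obtain ⟨s, hsmem, hsmax⟩ : ∃ s ∈ Finset.univ.filter
        (fun s : Fin n => s < t ∧ ¬((prv s ∈ S) ↔ (s ∈ S))),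
        ∀ r ∈ Finset.univ.filter
          (fun s : Fin n => s < t ∧ ¬((prv s ∈ S) ↔ (s ∈ S))), r ≤ s :=
      ⟨_, Finset.max'_mem _ hC, fun r hr => Finset.le_max' _ r hr⟩
    rw [Finset.mem_filter] at hsmem
    have hslt : s < t := hsmem.2.1
    have hcrs : ¬((prv s ∈ S) ↔ (s ∈ S)) := hsmem.2.2
    have hnc : ∀ r : Fin n, s < r → r < t → ((prv r ∈ S) ↔ (r ∈ S)) := by
      intro r hsr hrt
      by_contra hcr
      exact absurd (hsmax r (Finset.mem_filter.mpr ⟨mem_univ _, hrt, hcr⟩))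
        (not_le.mpr hsr)
    have hconst : ∀ p : Fin n, s ≤ p → p < t → ((p ∈ S) ↔ (s ∈ S)) := by
      intro p hsp hpt
      exact const_side S s t hnc (p.val - s.val) p
        (by rw [Fin.le_def] at hsp; omega) hpt
    have hprvt : prv t < t := by rw [Fin.lt_def]; simp only [prv]; omega
    have hsprvt : s ≤ prv t := by
      rw [Fin.le_def]; simp only [prv]; rw [Fin.lt_def] at hslt; omega
    have hst : ¬((s ∈ S) ↔ (t ∈ S)) := by
      have := hconst (prv t) hsprvt hprvt
      tauto
    -- set identities
    have hYsub : Ys S s ⊆ W' s := by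
      intro p hp
      rw [Ys, mem_filter] at hp
      rw [W', mem_filter]
      refine ⟨mem_univ _, ?_⟩
      rcases lt_or_eq_of_le hp.2.1 with h | h
      · exact h
      · exact absurd (by rw [h]) hp.2.2
    have hZsub : Zs S s ⊆ insert s (W' s) := by
      intro p hp
      rw [Zs, mem_filter] at hp
      rw [mem_insert, W', mem_filter]
      rcases lt_or_eq_of_le hp.2.1 with h | h
      · exact Or.inr ⟨mem_univ _, h⟩
      · exact Or.inl h
    have hZt : Zs S t = insert t (Ys S s) := by
      ext p
      simp only [Zs, Ys, mem_filter, mem_univ, true_and, mem_insert]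
      constructor
      · rintro ⟨h1, h2⟩
        by_cases hp : p = t
        · exact Or.inl hp
        · right
          have hplt : p < t := lt_of_le_of_ne h1 hp
          have hps : p ≤ s := by
            by_contra hh
            push_neg at hh
            have := hconst p hh.le hplt
            tauto
          exact ⟨hps, by tauto⟩
      · rintro (rfl | ⟨h1, h2⟩)
        · exact ⟨le_refl _, Iff.rfl⟩
        · exact ⟨le_trans h1 hslt.le, by tauto⟩
    have hYt : Ys S t =
        Zs S s ∪ Finset.univ.filter (fun p : Fin n => s < p ∧ p < t) := by
      ext p
      simp only [Ys, Zs, mem_union, mem_filter, mem_univ, true_and]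
      constructor
      · rintro ⟨h1, h2⟩
        have hpt : p ≠ t := by rintro rfl; exact h2 Iff.rfl
        have hplt : p < t := lt_of_le_of_ne h1 hpt
        by_cases hps : p ≤ s
        · exact Or.inl ⟨hps, by tauto⟩
        · exact Or.inr ⟨not_le.mp hps, hplt⟩
      · rintro (⟨h1, h2⟩ | ⟨h1, h2⟩)
        · exact ⟨le_trans h1 hslt.le, by tauto⟩
        · have := hconst p h1.le h2
          exact ⟨h2.le, by tauto⟩
    -- submodularity applications
    have hU1 : Zs S t ∪ W' s = insert t (W' s) := by
      rw [hZt, insert_union, union_eq_right.mpr hYsub]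
    have hI1 : Zs S t ∩ W' s = Ys S s := by
      rw [hZt]
      ext p
      simp only [mem_inter, mem_insert, W', Ys, mem_filter, mem_univ, true_and]
      constructor
      · rintro ⟨(rfl | h), hps⟩
        · exact absurd hps (not_lt.mpr hslt.le)
        · exact h
      · intro h
        refine ⟨Or.inr h, ?_⟩
        rcases lt_or_eq_of_le h.1 with hh | hh
        · exact hh
        · exact absurd (by rw [hh]) h.2
    have hU2 : Ys S t ∪ insert s (W' s) = W' t := by
      rw [hYt]
      ext p
      simp only [mem_union, mem_insert, mem_filter, mem_univ, true_and, W', Zs]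
      rw [Fin.lt_def, Fin.lt_def, Fin.le_def, Fin.lt_def]
      rw [Fin.lt_def] at hslt
      constructor
      · rintro ((⟨h1, _⟩ | ⟨h1, h2⟩) | (rfl | h1))
        · omega
        · omega
        · omega
        · omega
      · intro h
        rcases lt_trichotomy p.val s.val with hh | hh | hh
        · exact Or.inr (Or.inr hh)
        · exact Or.inr (Or.inl (Fin.ext hh))
        · exact Or.inl (Or.inr ⟨hh, h⟩)
    have hI2 : Ys S t ∩ insert s (W' s) = Zs S s := by
      rw [hYt]
      ext p
      simp only [mem_inter, mem_union, mem_insert, mem_filter, mem_univ, true_and, W', Zs]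
      constructor
      · rintro ⟨(hZ | hM), hW⟩
        · exact hZ
        · exfalso
          rcases hW with rfl | hW
          · exact absurd hM.1 (lt_irrefl _)
          · exact absurd (lt_trans hW hM.1) (lt_irrefl _)
      · intro h
        refine ⟨Or.inl h, ?_⟩
        rcases lt_or_eq_of_le h.1 with hh | hh
        · exact Or.inr hh
        · exact Or.inl hh
    have e1 := hsub (Zs S t) (W' s)
    rw [hU1, hI1] at e1
    have e2 := hsub (Ys S t) (insert s (W' s))
    rw [hU2, hI2] at e2
    have e3 := hord s t hslt.le
    have hs0 : 0 < s.val := by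
      by_contra h
      have : prv s = s := Fin.ext (by simp only [prv]; omega)
      rw [this] at hcrs
      exact hcrs Iff.rfl
    have e4 := IH s.val (by rw [Fin.lt_def] at hslt; omega) s rfl hcrs
    -- e4 already in z0 form
    linarith
  · -- no previous crossing: base case
    have hnc : ∀ r : Fin n, z0 < r → r < t → ((prv r ∈ S) ↔ (r ∈ S)) := by
      intro r _ hrt
      by_contra hcr
      exact hC ⟨r, by rw [mem_filter]; exact ⟨mem_univ _, hrt, hcr⟩⟩
    have hconst : ∀ p : Fin n, p < t → ((p ∈ S) ↔ (z0 ∈ S)) := by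
      intro p hpt
      exact const_side S z0 t hnc p.val p (by simp [hz0]) hpt
    have hprvt : prv t < t := by rw [Fin.lt_def]; simp only [prv]; omega
    have hz0t : ¬((z0 ∈ S) ↔ (t ∈ S)) := by
      have := hconst (prv t) hprvt
      tauto
    have hZeq : Zs S t = {t} := by
      ext p
      simp only [Zs, mem_filter, mem_univ, true_and, mem_singleton]
      constructor
      · rintro ⟨h1, h2⟩
        by_contra hp
        have hplt : p < t := lt_of_le_of_ne h1 hp
        have := hconst p hplt
        tauto
      · rintro rfl
        exact ⟨le_refl _, Iff.rfl⟩
    have hYeq : Ys S t = W' t := by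
      ext p
      simp only [Ys, W', mem_filter, mem_univ, true_and]
      constructor
      · rintro ⟨h1, h2⟩
        rcases lt_or_eq_of_le h1 with h | h
        · exact h
        · exact absurd (by rw [h]) h2
      · intro h
        have := hconst p h
        exact ⟨h.le, by tauto⟩
    rw [hZeq, hYeq]
    linarith
end Stmt5Aux

set_option maxHeartbeats 3000000 in
open Stmt5Aux in
/-- Corollary 5.4: for a symmetric submodular `f`, `α ∈ [-1, 1]`, and an `α`-ordering
`(v_1, …, v_n)` of `V`, the pair `(v_{n-1}, v_n)` is contractible. -/
theorem stmt_5 {n : ℕ} (hn : 2 ≤ n) {V : Type*} [DecidableEq V] [Fintype V]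
    (f : Finset V → ℝ) (hsym : ∀ X : Finset V, f X = f Xᶜ) (hf : Submodular f)
    (α : ℝ) (hα : α ∈ Set.Icc (-1 : ℝ) 1)
    (v : Fin n → V) (hv : Function.Bijective v)
    (hord : IsAlphaOrdering α f v) :
    ContractiblePair f (v ⟨n - 2, by omega⟩) (v ⟨n - 1, by omega⟩) := by
  intro X hXss hXcard
  have hinj := hv.1
  have hn0 : 0 < n := by omega
  set t : Fin n := ⟨n - 1, by omega⟩ with htdef
  set s' : Fin n := ⟨n - 2, by omega⟩ with hsdef
  set S : Finset (Fin n) := Finset.univ.filter (fun p => v p ∈ X) with hSdef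
  have hprv : prv t = s' := Fin.ext (by simp only [prv, htdef, hsdef, Fin.val_mk]; omega)
  have hne : v s' ≠ v t := by
    intro h
    have := hinj h
    have := congrArg Fin.val this
    simp only [hsdef, htdef] at this
    omega
  have hcrossX : ¬(v s' ∈ X ↔ v t ∈ X) := by
    by_cases h1 : v s' ∈ X <;> by_cases h2 : v t ∈ X
    · exfalso
      have hsub2 : ({v s', v t} : Finset V) ⊆ X := by
        simp [insert_subset_iff, h1, h2]
      rw [inter_eq_right.mpr hsub2, card_pair hne] at hXcard
      omega
    · tauto
    · tauto
    · exfalso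
      have : X ∩ ({v s', v t} : Finset V) = ∅ := by
        ext x
        simp only [mem_inter, mem_insert, mem_singleton, notMem_empty, iff_false, not_and]
        rintro hx (rfl | rfl) <;> tauto
      rw [this] at hXcard
      simp at hXcard
  have hcross : ¬((prv t ∈ S) ↔ (t ∈ S)) := by
    rw [hprv]
    simpa [hSdef] using hcrossX
  have hgsub : ∀ A B : Finset (Fin n),
      f ((A ∪ B).image v) + f ((A ∩ B).image v) ≤ f (A.image v) + f (B.image v) := by
    intro A B
    rw [Finset.image_union, Finset.image_inter _ _ hinj]
    exact hf _ _
  have hgord : ∀ i j : Fin n, i ≤ j →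
      f ((insert i (W' i)).image v) + α * f (({i} : Finset (Fin n)).image v) ≤
        f ((insert j (W' i)).image v) + α * f (({j} : Finset (Fin n)).image v) := by
    intro i j hij
    have h := hord i j hij
    simpa [Finset.image_insert, prefSet, W'] using h
  have hcore := core hn0 (fun T => f (T.image v)) α hα.1 hgsub hgord S t.val t rfl hcross
  -- compute the images
  have hple : ∀ p : Fin n, p ≤ t := by
    intro p
    rw [Fin.le_def]
    have := p.isLt
    simp only [htdef]
    omega
  have himgin : (Finset.univ.filter (fun p => v p ∈ X)).image v = X := by
    ext x
    simp only [mem_image, mem_filter, mem_univ, true_and]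
    constructor
    · rintro ⟨p, hp, rfl⟩; exact hp
    · intro hx
      obtain ⟨p, rfl⟩ := hv.2 x
      exact ⟨p, hx, rfl⟩
  have himgout : (Finset.univ.filter (fun p => v p ∉ X)).image v = Xᶜ := by
    ext x
    simp only [mem_image, mem_filter, mem_univ, true_and, mem_compl]
    constructor
    · rintro ⟨p, hp, rfl⟩; exact hp
    · intro hx
      obtain ⟨p, rfl⟩ := hv.2 x
      exact ⟨p, hx, rfl⟩
  have hWimg : (W' t).image v = ({v t} : Finset V)ᶜ := by
    ext x
    simp only [W', mem_image, mem_filter, mem_univ, true_and, mem_compl, mem_singleton]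
    constructor
    · rintro ⟨p, hp, rfl⟩
      intro h
      have := hinj h
      rw [this] at hp
      exact absurd hp (lt_irrefl _)
    · intro hx
      obtain ⟨p, rfl⟩ := hv.2 x
      refine ⟨p, ?_, rfl⟩
      have hpt : p ≠ t := fun h => hx (by rw [h])
      rw [Fin.lt_def]
      have h1 := p.isLt
      have h2 : p.val ≠ t.val := fun h => hpt (Fin.ext h)
      simp only [htdef] at h2 ⊢
      omega
  have hZYsum : f ((Zs S t).image v) + f ((Ys S t).image v) = f X + f X := by
    by_cases hts : t ∈ S
    · have hZeq : Zs S t = Finset.univ.filter (fun p => v p ∈ X) := by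
        ext p
        have hvp := hple p
        simp only [Zs, mem_filter, mem_univ, true_and, hSdef] at *
        have htX : v t ∈ X := by simpa [hSdef] using hts
        constructor
        · rintro ⟨_, h⟩; exact h.mpr htX
        · intro h; exact ⟨hvp, by tauto⟩
      have hYeq : Ys S t = Finset.univ.filter (fun p => v p ∉ X) := by
        ext p
        have hvp := hple p
        simp only [Ys, mem_filter, mem_univ, true_and, hSdef] at *
        have htX : v t ∈ X := by simpa [hSdef] using hts
        constructor
        · rintro ⟨_, h⟩; tauto
        · intro h; exact ⟨hvp, by tauto⟩
      rw [hZeq, hYeq, himgin, himgout, ← hsym X]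
    · have htX : v t ∉ X := by simpa [hSdef] using hts
      have hZeq : Zs S t = Finset.univ.filter (fun p => v p ∉ X) := by
        ext p
        have hvp := hple p
        simp only [Zs, mem_filter, mem_univ, true_and, hSdef] at *
        constructor
        · rintro ⟨_, h⟩; tauto
        · intro h; exact ⟨hvp, by tauto⟩
      have hYeq : Ys S t = Finset.univ.filter (fun p => v p ∈ X) := by
        ext p
        have hvp := hple p
        simp only [Ys, mem_filter, mem_univ, true_and, hSdef] at *
        constructor
        · rintro ⟨_, h⟩; tauto
        · intro h; exact ⟨hvp, by tauto⟩
      rw [hZeq, hYeq, himgin, himgout, ← hsym X]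
  simp only [hWimg, Finset.image_singleton] at hcore
  rw [hZYsum] at hcore
  rw [← hsym ({v t} : Finset V)] at hcore
  -- hcore : f {v t} + (1+α) * f {v ⟨0,hn0⟩} ≤ f X + f X + α * f {v t}
  have hi1 : Finset.univ.inf' ⟨v s', Finset.mem_univ _⟩ (fun x => f {x}) ≤ f {v t} :=
    Finset.inf'_le _ (Finset.mem_univ _)
  have hi2 : Finset.univ.inf' ⟨v s', Finset.mem_univ _⟩ (fun x => f {x}) ≤
      f {v (⟨0, hn0⟩ : Fin n)} :=
    Finset.inf'_le _ (Finset.mem_univ _)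
  have ha1 : (0:ℝ) ≤ 1 - α := by linarith [hα.2]
  have ha2 : (0:ℝ) ≤ 1 + α := by linarith [hα.1]
  nlinarith [mul_nonneg ha1 (sub_nonneg.mpr hi1), mul_nonneg ha2 (sub_nonneg.mpr hi2)]
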